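/- arXiv:1210.3140 — 2 statements merged into one kernel-verified Lean document; each statement's English description precedes it below -/
import Mathlib

section
/- Under the kinematic equations for rolling the Lorentzian sphere, rolling realizes normal parallel transport: the normal vector field Ψ(t) := R(t) x0 along the rolling curve x(t) := R(t) x0 satisfies ⟨Ψ′(t), x(t)⟩_J = 0 for all t, i.e. its normal covariant derivative ⟨Ψ′(t), x(t)⟩_J · x(t) vanishes identically. -/
open Matrix

noncomputable section

/-- `J = diag(-1, I_m)` on `ℝ^{m+1}`. -/
def lorJ (m : ℕ) : Matrix (Fin (m+1)) (Fin (m+1)) ℝ :=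
  Matrix.diagonal (fun i => if i = 0 then (-1 : ℝ) else 1)

/-- The scalar product `⟨x,y⟩_J = xᵗ J y`. -/
def lorIp {m : ℕ} (x y : Fin (m+1) → ℝ) : ℝ :=
  x ⬝ᵥ (lorJ m) *ᵥ y

lemma lorJ_transpose (m : ℕ) : (lorJ m)ᵀ = lorJ m := by
  simp [lorJ]

lemma lorIp_invariant {m : ℕ} (R : Matrix (Fin (m+1)) (Fin (m+1)) ℝ)
    (hRJ : Rᵀ * lorJ m * R = lorJ m) (a b : Fin (m+1) → ℝ) :
    lorIp (R *ᵥ a) (R *ᵥ b) = lorIp a b := by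
  unfold lorIp
  rw [mulVec_mulVec, dotProduct_mulVec, vecMul_mulVec, ← Matrix.mul_assoc, hRJ,
    ← dotProduct_mulVec]

lemma vecMulVec_mulVec {m : ℕ} (a b v : Fin (m+1) → ℝ) :
    vecMulVec a b *ᵥ v = (b ⬝ᵥ v) • a := by
  ext i
  simp only [vecMulVec, mulVec, dotProduct, Matrix.of_apply, Pi.smul_apply, smul_eq_mul,
    Finset.sum_mul]
  exact Finset.sum_congr rfl fun j _ => by ring

/-- Rolling the Lorentzian sphere realizes normal parallel transport: the normal
vector field `Ψ(t) := R(t) x0` along the rolling curve `x(t) := R(t) x0` satisfies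
`⟨Ψ′(t), x(t)⟩_J = 0`, i.e. its normal covariant derivative
`⟨Ψ′(t), x(t)⟩_J • x(t)` vanishes identically. -/
theorem rolling_realizes_normal_parallel_transport (m : ℕ)
    (x0 : Fin (m+1) → ℝ) (hx0 : lorIp x0 x0 = 1)
    (u : ℝ → Fin (m+1) → ℝ) (hucont : Continuous u)
    (hu : ∀ t, lorIp (u t) x0 = 0)
    (R : ℝ → Matrix (Fin (m+1)) (Fin (m+1)) ℝ)
    (hR : ∀ t i j, HasDerivAt (fun s => R s i j)
      ((R t * ((vecMulVec (u t) x0 - vecMulVec x0 (u t)) * lorJ m)) i j) t)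
    (hRJ : ∀ t, (R t)ᵀ * lorJ m * R t = lorJ m) :
    ∀ t,
      lorIp (deriv (fun s => R s *ᵥ x0) t) (R t *ᵥ x0) = 0 ∧
      lorIp (deriv (fun s => R s *ᵥ x0) t) (R t *ᵥ x0) • (R t *ᵥ x0) = 0 := by
  intro t
  set A : Matrix (Fin (m+1)) (Fin (m+1)) ℝ :=
    (vecMulVec (u t) x0 - vecMulVec x0 (u t)) * lorJ m with hA
  -- derivative of the curve
  have hD : HasDerivAt (fun s => R s *ᵥ x0) ((R t * A) *ᵥ x0) t := by
    rw [hasDerivAt_pi]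
    intro i
    have h := HasDerivAt.fun_sum (fun j (_ : j ∈ Finset.univ) => (hR t i j).mul_const (x0 j))
    simpa [mulVec, dotProduct] using h
  have hderiv : deriv (fun s => R s *ᵥ x0) t = (R t * A) *ᵥ x0 := hD.deriv
  -- compute A *ᵥ x0 = u t
  have hAx0 : A *ᵥ x0 = u t := by
    have h1 : x0 ⬝ᵥ (lorJ m *ᵥ x0) = 1 := hx0
    have h2 : (u t) ⬝ᵥ (lorJ m *ᵥ x0) = 0 := hu t
    rw [hA, ← mulVec_mulVec, sub_mulVec, _root_.vecMulVec_mulVec, _root_.vecMulVec_mulVec, h1, h2]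
    simp
  have key : lorIp ((R t * A) *ᵥ x0) (R t *ᵥ x0) = 0 := by
    rw [← mulVec_mulVec, hAx0, lorIp_invariant (R t) (hRJ t), hu t]
  rw [hderiv]
  exact ⟨key, by rw [key]; simp⟩
end
end

section
/- Let x0, x1 be distinct points of ℝ^{m+1} with ⟨x0,x0⟩_J = ⟨x1,x1⟩_J = 1. Then x1 is reachable from x0 by a null (lightlike) geodesic — i.e. there exist u ≠ 0 with ⟨u,u⟩_J = 0, ⟨u,x0⟩_J = 0 and t > 0 such that x0 + t·u = x1 — if and only if ⟨x0,x1⟩_J = 1 (equivalently, if and only if x1 lies on the affine tangent hyperplane of S_1^m at x0). -/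
open Matrix Real

noncomputable section

lemma lorIp_eq_sum {m : ℕ} (x y : Fin (m+1) → ℝ) :
    lorIp x y = ∑ i, (if i = 0 then (-1:ℝ) else 1) * (x i * y i) := by
  simp [lorIp, lorJ, dotProduct, mulVec, Matrix.diagonal, Finset.mul_sum]

lemma lorIp_comm {m : ℕ} (x y : Fin (m+1) → ℝ) : lorIp x y = lorIp y x := by
  simp only [lorIp_eq_sum]
  apply Finset.sum_congr rfl
  intro i _
  ring

lemma lorIp_add_left {m : ℕ} (x y z : Fin (m+1) → ℝ) :
    lorIp (x + y) z = lorIp x z + lorIp y z := by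
  simp only [lorIp_eq_sum, ← Finset.sum_add_distrib]
  apply Finset.sum_congr rfl
  intro i _
  simp only [Pi.add_apply]; split <;> ring

lemma lorIp_smul_left {m : ℕ} (t : ℝ) (x y : Fin (m+1) → ℝ) :
    lorIp (t • x) y = t * lorIp x y := by
  simp only [lorIp_eq_sum, Finset.mul_sum]
  apply Finset.sum_congr rfl
  intro i _
  simp only [Pi.smul_apply, smul_eq_mul]
  split <;> ring

lemma lorIp_sub_left {m : ℕ} (x y z : Fin (m+1) → ℝ) :
    lorIp (x - y) z = lorIp x z - lorIp y z := by
  have := lorIp_add_left (x - y) y z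
  simp at this
  linarith

/-- For distinct `x0, x1 ∈ S_1^m`: `x1` is reachable from `x0` by a null geodesic
if and only if `⟨x0,x1⟩_J = 1`, i.e. iff `x1` lies on the affine tangent hyperplane
of `S_1^m` at `x0`. -/
theorem null_geodesic_reachability (m : ℕ) (x0 x1 : Fin (m+1) → ℝ)
    (hx0 : lorIp x0 x0 = 1) (hx1 : lorIp x1 x1 = 1) (hne : x1 ≠ x0) :
    (∃ u : Fin (m+1) → ℝ, u ≠ 0 ∧ lorIp u u = 0 ∧ lorIp u x0 = 0 ∧
        ∃ t : ℝ, 0 < t ∧ x0 + t • u = x1) ↔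
      lorIp x0 x1 = 1 := by
  constructor
  · rintro ⟨u, hu0, huu, hux0, t, ht, hxt⟩
    have : lorIp x0 x1 = lorIp x0 x0 + t * lorIp u x0 := by
      rw [← hxt, lorIp_comm, lorIp_add_left, lorIp_smul_left, lorIp_comm x0 x0]
    rw [this, hx0, hux0]; ring
  · intro h
    refine ⟨x1 - x0, sub_ne_zero.mpr hne, ?_, ?_, 1, one_pos, ?_⟩
    · have h1 : lorIp (x1 - x0) (x1 - x0) = lorIp (x1 - x0) x1 - lorIp (x1 - x0) x0 := by
        rw [lorIp_comm, lorIp_sub_left, lorIp_comm x1, lorIp_comm x0]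
      rw [h1, lorIp_sub_left, lorIp_sub_left, hx1, hx0, lorIp_comm x1 x0, h]
      ring
    · rw [lorIp_sub_left, hx0, lorIp_comm, h]; ring
    · simp
end
end
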